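/- Let ≿ be the α-maxmin expected utility preference on 𝓕 represented by f ↦ α min_{p∈P₁} ∫ u(f) dp + (1−α) max_{p∈P₂} ∫ u(f) dp, where u : X → ℝ is nonconstant affine with 0 in the interior of u(X), P₁, P₂ ⊆ Δ are nonempty, convex and weak*-compact, and α ∈ [0,1]. Then its maximal family of prior sets satisfies 𝒫* = {P ⊆ Δ : P nonempty, convex and weak*-compact, and αP₁ ⊆ P − (1−α)P₂}, where P − (1−α)P₂ and αP₁ denote Minkowski operations. -/

import Mathlib

open scoped Pointwise
open MeasureTheory

namespace Paper

variable {S V : Type*}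

/-- An algebra of subsets of `S` (the events `Σ`). -/
structure IsSetAlg (𝓐 : Set (Set S)) : Prop where
  empty_mem : ∅ ∈ 𝓐
  compl_mem : ∀ A ∈ 𝓐, Aᶜ ∈ 𝓐
  union_mem : ∀ A ∈ 𝓐, ∀ B ∈ 𝓐, A ∪ B ∈ 𝓐

/-- `B₀(Σ)`: real-valued `Σ`-measurable simple functions. -/
def IsSimpleFn (𝓐 : Set (Set S)) (φ : S → ℝ) : Prop :=
  (Set.range φ).Finite ∧ ∀ t : ℝ, φ ⁻¹' {t} ∈ 𝓐

open Classical in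
/-- The integral of a simple function with respect to a finitely additive set function. -/
noncomputable def fint (p : Set S → ℝ) (φ : S → ℝ) : ℝ :=
  if h : (Set.range φ).Finite then ∑ t ∈ h.toFinset, t * p (φ ⁻¹' {t}) else 0

/-- `Δ`: the finitely additive probabilities on `Σ` (canonically extended by `0` off `Σ`). -/
def Δset (𝓐 : Set (Set S)) : Set (Set S → ℝ) :=
  {p | p Set.univ = 1 ∧ (∀ A ∈ 𝓐, 0 ≤ p A) ∧
    (∀ A ∈ 𝓐, ∀ B ∈ 𝓐, Disjoint A B → p (A ∪ B) = p A + p B) ∧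
    ∀ A : Set S, A ∉ 𝓐 → p A = 0}

/-- The weak* topology `σ(Δ, B₀(Σ))`, i.e. the topology induced by the evaluation maps
`p ↦ ∫ φ dp`, `φ ∈ B₀(Σ)`. -/
noncomputable def weakStar (𝓐 : Set (Set S)) : TopologicalSpace (Set S → ℝ) :=
  TopologicalSpace.induced
    (fun p => fun φ : {φ : S → ℝ // IsSimpleFn 𝓐 φ} => fint p φ.1)
    Pi.topologicalSpace

/-- `𝒞`: the weak*-lower semicontinuous convex functions `c : Δ → (-∞, ∞]`. -/
def Cscr (𝓐 : Set (Set S)) : Set ((Set S → ℝ) → EReal) :=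
  {c | (∀ p ∈ Δset 𝓐, ⊥ < c p) ∧
    (@LowerSemicontinuousOn (Set S → ℝ) EReal (weakStar 𝓐) _ c (Δset 𝓐)) ∧
    ∀ p ∈ Δset 𝓐, ∀ q ∈ Δset 𝓐, ∀ a b : ℝ, 0 ≤ a → 0 ≤ b → a + b = 1 →
      c (a • p + b • q) ≤ (a : EReal) * c p + (b : EReal) * c q}

/-- A subset `C ⊆ 𝒞` is grounded if `sup_{c ∈ C} min_{p ∈ Δ} c p = 0`. -/
def Grounded (𝓐 : Set (Set S)) (C : Set ((Set S → ℝ) → EReal)) : Prop :=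
  (⨆ c ∈ C, ⨅ p ∈ Δset 𝓐, c p) = 0

/-- `min_{p ∈ Δ} (∫ φ dp + c p)`. -/
noncomputable def minVal (𝓐 : Set (Set S)) (c : (Set S → ℝ) → EReal) (φ : S → ℝ) : EReal :=
  ⨅ p ∈ Δset 𝓐, ((fint p φ : EReal) + c p)

/-- `max_{q ∈ Δ} (∫ φ dq - b q)`. -/
noncomputable def maxVal (𝓐 : Set (Set S)) (b : (Set S → ℝ) → EReal) (φ : S → ℝ) : EReal :=
  ⨆ q ∈ Δset 𝓐, ((fint q φ : EReal) - b q)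

/-- `max_{c ∈ C} min_{p ∈ Δ} (∫ φ dp + c p)`. -/
noncomputable def maxminVal (𝓐 : Set (Set S)) (C : Set ((Set S → ℝ) → EReal))
    (φ : S → ℝ) : EReal :=
  ⨆ c ∈ C, minVal 𝓐 c φ

/-- `min_{b ∈ B} max_{q ∈ Δ} (∫ φ dq - b q)`. -/
noncomputable def minmaxVal (𝓐 : Set (Set S)) (B : Set ((Set S → ℝ) → EReal))
    (φ : S → ℝ) : EReal :=
  ⨅ b ∈ B, maxVal 𝓐 b φ

/-- `min_{p ∈ P} ∫ φ dp`. -/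
noncomputable def minPVal (P : Set (Set S → ℝ)) (φ : S → ℝ) : EReal :=
  ⨅ p ∈ P, (fint p φ : EReal)

/-- `max_{q ∈ Q} ∫ φ dq`. -/
noncomputable def maxQVal (Q : Set (Set S → ℝ)) (φ : S → ℝ) : EReal :=
  ⨆ q ∈ Q, (fint q φ : EReal)

/-- `max_{P ∈ Pfam} min_{p ∈ P} ∫ φ dp`. -/
noncomputable def maxminPVal (Pfam : Set (Set (Set S → ℝ))) (φ : S → ℝ) : EReal :=
  ⨆ P ∈ Pfam, minPVal P φ

/-- `min_{Q ∈ Qfam} max_{q ∈ Q} ∫ φ dq`. -/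
noncomputable def minmaxQVal (Qfam : Set (Set (Set S → ℝ))) (φ : S → ℝ) : EReal :=
  ⨅ Q ∈ Qfam, maxQVal Q φ

open Classical in
/-- The convex-analytic indicator `δ_P` of a set `P`. -/
noncomputable def ind (P : Set (Set S → ℝ)) : (Set S → ℝ) → EReal :=
  fun p => if p ∈ P then (0 : EReal) else ⊤

variable [AddCommGroup V] [Module ℝ V]

/-- `𝓕`: the simple acts, i.e. `Σ`-measurable maps `f : S → X` with finitely many values. -/
def Acts (𝓐 : Set (Set S)) (X : Set V) : Set (S → V) :=
  {f | (∀ s, f s ∈ X) ∧ (Set.range f).Finite ∧ ∀ v : V, f ⁻¹' {v} ∈ 𝓐}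

/-- The constant act with value `x`. -/
def constAct (x : V) : S → V := fun _ : S => x

/-- The mixture `α f + (1 - α) g` of two acts, defined statewise. -/
def mix (α : ℝ) (f g : S → V) : S → V := fun s => α • f s + (1 - α) • g s

/-- The statewise utility `u ∘ f` of an act. -/
def uAct (u : V → ℝ) (f : S → V) : S → ℝ := fun s => u (f s)

/-- `u : X → ℝ` is nonconstant and affine on `X`. -/
def IsNonconstAffine (X : Set V) (u : V → ℝ) : Prop :=
  (∀ x ∈ X, ∀ y ∈ X, ∀ t ∈ Set.Icc (0 : ℝ) 1,
      u (t • x + (1 - t) • y) = t * u x + (1 - t) * u y) ∧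
  ∃ x ∈ X, ∃ y ∈ X, u x ≠ u y

/-- A niveloidal preference: Axioms A1 (weak order), A2 (monotonicity), A3 (Archimedean)
and A4 (weak C-independence). -/
structure NiveloidalPref (𝓐 : Set (Set S)) (X : Set V)
    (R : (S → V) → (S → V) → Prop) : Prop where
  nontrivial : ∃ f ∈ Acts 𝓐 X, ∃ g ∈ Acts 𝓐 X, R f g ∧ ¬ R g f
  complete : ∀ f ∈ Acts 𝓐 X, ∀ g ∈ Acts 𝓐 X, R f g ∨ R g f
  transitive : ∀ f ∈ Acts 𝓐 X, ∀ g ∈ Acts 𝓐 X, ∀ h ∈ Acts 𝓐 X, R f g → R g h → R f h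
  monotone : ∀ f ∈ Acts 𝓐 X, ∀ g ∈ Acts 𝓐 X,
    (∀ s : S, R (constAct (f s)) (constAct (g s))) → R f g
  archimedean : ∀ f ∈ Acts 𝓐 X, ∀ g ∈ Acts 𝓐 X, ∀ h ∈ Acts 𝓐 X,
    (R f g ∧ ¬ R g f) → (R g h ∧ ¬ R h g) →
    ∃ α ∈ Set.Ioo (0 : ℝ) 1, ∃ β ∈ Set.Ioo (0 : ℝ) 1,
      (R (mix α f h) g ∧ ¬ R g (mix α f h)) ∧
      (R g (mix β f h) ∧ ¬ R (mix β f h) g)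
  weakCIndep : ∀ f ∈ Acts 𝓐 X, ∀ g ∈ Acts 𝓐 X, ∀ x ∈ X, ∀ y ∈ X,
    ∀ α ∈ Set.Ioo (0 : ℝ) 1,
    R (mix α f (constAct x)) (mix α g (constAct x)) →
    R (mix α f (constAct y)) (mix α g (constAct y))

/-- An invariant biseparable preference: Axioms A1 (weak order), A2 (monotonicity),
A3 (Archimedean) and A7 (C-independence). -/
structure IBPref (𝓐 : Set (Set S)) (X : Set V)
    (R : (S → V) → (S → V) → Prop) : Prop where
  nontrivial : ∃ f ∈ Acts 𝓐 X, ∃ g ∈ Acts 𝓐 X, R f g ∧ ¬ R g f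
  complete : ∀ f ∈ Acts 𝓐 X, ∀ g ∈ Acts 𝓐 X, R f g ∨ R g f
  transitive : ∀ f ∈ Acts 𝓐 X, ∀ g ∈ Acts 𝓐 X, ∀ h ∈ Acts 𝓐 X, R f g → R g h → R f h
  monotone : ∀ f ∈ Acts 𝓐 X, ∀ g ∈ Acts 𝓐 X,
    (∀ s : S, R (constAct (f s)) (constAct (g s))) → R f g
  archimedean : ∀ f ∈ Acts 𝓐 X, ∀ g ∈ Acts 𝓐 X, ∀ h ∈ Acts 𝓐 X,
    (R f g ∧ ¬ R g f) → (R g h ∧ ¬ R h g) →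
    ∃ α ∈ Set.Ioo (0 : ℝ) 1, ∃ β ∈ Set.Ioo (0 : ℝ) 1,
      (R (mix α f h) g ∧ ¬ R g (mix α f h)) ∧
      (R g (mix β f h) ∧ ¬ R (mix β f h) g)
  cIndep : ∀ f ∈ Acts 𝓐 X, ∀ g ∈ Acts 𝓐 X, ∀ x ∈ X, ∀ α ∈ Set.Ioo (0 : ℝ) 1,
    (R f g ↔ R (mix α f (constAct x)) (mix α g (constAct x)))

/-- Axiom A5 (uncertainty aversion). -/
def UncertaintyAverse (𝓐 : Set (Set S)) (X : Set V)
    (R : (S → V) → (S → V) → Prop) : Prop :=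
  ∀ f ∈ Acts 𝓐 X, ∀ g ∈ Acts 𝓐 X, ∀ α ∈ Set.Ioo (0 : ℝ) 1,
    R f g → R g f → R (mix α f g) f

/-- `xf` assigns to every act a certainty equivalent. -/
def IsCE (𝓐 : Set (Set S)) (X : Set V) (R : (S → V) → (S → V) → Prop)
    (xf : (S → V) → V) : Prop :=
  ∀ f ∈ Acts 𝓐 X, xf f ∈ X ∧ R f (constAct (xf f)) ∧ R (constAct (xf f)) f

/-- `C*`: the maximal candidate set of penalty functions. -/
def CstarOf (𝓐 : Set (Set S)) (X : Set V) (u : V → ℝ) (xf : (S → V) → V) :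
    Set ((Set S → ℝ) → EReal) :=
  {c | c ∈ Cscr 𝓐 ∧ ∀ f ∈ Acts 𝓐 X, minVal 𝓐 c (uAct u f) ≤ (u (xf f) : EReal)}

/-- `B*`: the maximal candidate set of reward functions. -/
def BstarOf (𝓐 : Set (Set S)) (X : Set V) (u : V → ℝ) (xf : (S → V) → V) :
    Set ((Set S → ℝ) → EReal) :=
  {b | b ∈ Cscr 𝓐 ∧ ∀ f ∈ Acts 𝓐 X, (u (xf f) : EReal) ≤ maxVal 𝓐 b (uAct u f)}

/-- `Pfam*`: the maximal family of prior sets (maxmin form). -/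
def PstarOf (𝓐 : Set (Set S)) (X : Set V) (u : V → ℝ) (xf : (S → V) → V) :
    Set (Set (Set S → ℝ)) :=
  {P | P ⊆ Δset 𝓐 ∧ P.Nonempty ∧ Convex ℝ P ∧ (@IsCompact _ (weakStar 𝓐) P) ∧
    ∀ f ∈ Acts 𝓐 X, minPVal P (uAct u f) ≤ (u (xf f) : EReal)}

/-- `Qfam*`: the maximal family of prior sets (minmax form). -/
def QstarOf (𝓐 : Set (Set S)) (X : Set V) (u : V → ℝ) (xf : (S → V) → V) :
    Set (Set (Set S → ℝ)) :=
  {Q | Q ⊆ Δset 𝓐 ∧ Q.Nonempty ∧ Convex ℝ Q ∧ (@IsCompact _ (weakStar 𝓐) Q) ∧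
    ∀ f ∈ Acts 𝓐 X, (u (xf f) : EReal) ≤ maxQVal Q (uAct u f)}

/-- `C` yields the maxmin representation of `R` with utility `u`. -/
def MaxminRep (𝓐 : Set (Set S)) (X : Set V) (R : (S → V) → (S → V) → Prop)
    (u : V → ℝ) (C : Set ((Set S → ℝ) → EReal)) : Prop :=
  ∀ f ∈ Acts 𝓐 X, ∀ g ∈ Acts 𝓐 X,
    (R f g ↔ maxminVal 𝓐 C (uAct u g) ≤ maxminVal 𝓐 C (uAct u f))

/-- All indicated maxima over `C` and minima over `Δ` are attained. -/
def MaxminAttained (𝓐 : Set (Set S)) (X : Set V) (u : V → ℝ)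
    (C : Set ((Set S → ℝ) → EReal)) : Prop :=
  ∀ f ∈ Acts 𝓐 X,
    (∀ c ∈ C, ∃ p ∈ Δset 𝓐,
      minVal 𝓐 c (uAct u f) = (fint p (uAct u f) : EReal) + c p) ∧
    ∃ c ∈ C, maxminVal 𝓐 C (uAct u f) = minVal 𝓐 c (uAct u f)

/-- `B` yields the minmax representation of `R` with utility `u`. -/
def MinmaxRep (𝓐 : Set (Set S)) (X : Set V) (R : (S → V) → (S → V) → Prop)
    (u : V → ℝ) (B : Set ((Set S → ℝ) → EReal)) : Prop :=
  ∀ f ∈ Acts 𝓐 X, ∀ g ∈ Acts 𝓐 X,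
    (R f g ↔ minmaxVal 𝓐 B (uAct u g) ≤ minmaxVal 𝓐 B (uAct u f))

/-- All indicated minima over `B` and maxima over `Δ` are attained. -/
def MinmaxAttained (𝓐 : Set (Set S)) (X : Set V) (u : V → ℝ)
    (B : Set ((Set S → ℝ) → EReal)) : Prop :=
  ∀ f ∈ Acts 𝓐 X,
    (∀ b ∈ B, ∃ q ∈ Δset 𝓐,
      maxVal 𝓐 b (uAct u f) = (fint q (uAct u f) : EReal) - b q) ∧
    ∃ b ∈ B, minmaxVal 𝓐 B (uAct u f) = maxVal 𝓐 b (uAct u f)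

/-- A family of nonempty, convex, weak*-compact subsets of `Δ`. -/
def IsPriorFamily (𝓐 : Set (Set S)) (Pfam : Set (Set (Set S → ℝ))) : Prop :=
  Pfam.Nonempty ∧ ∀ P ∈ Pfam,
    P ⊆ Δset 𝓐 ∧ P.Nonempty ∧ Convex ℝ P ∧ (@IsCompact _ (weakStar 𝓐) P)

/-- `Pfam` yields the maxmin representation of `R` with utility `u`. -/
def PRep (𝓐 : Set (Set S)) (X : Set V) (R : (S → V) → (S → V) → Prop)
    (u : V → ℝ) (Pfam : Set (Set (Set S → ℝ))) : Prop :=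
  ∀ f ∈ Acts 𝓐 X, ∀ g ∈ Acts 𝓐 X,
    (R f g ↔ maxminPVal Pfam (uAct u g) ≤ maxminPVal Pfam (uAct u f))

/-- All indicated maxima over `Pfam` and minima over `P` are attained. -/
def PAttained (𝓐 : Set (Set S)) (X : Set V) (u : V → ℝ)
    (Pfam : Set (Set (Set S → ℝ))) : Prop :=
  ∀ f ∈ Acts 𝓐 X,
    (∀ P ∈ Pfam, ∃ p ∈ P, minPVal P (uAct u f) = (fint p (uAct u f) : EReal)) ∧
    ∃ P ∈ Pfam, maxminPVal Pfam (uAct u f) = minPVal P (uAct u f)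

/-- `Qfam` yields the minmax representation of `R` with utility `u`. -/
def QRep (𝓐 : Set (Set S)) (X : Set V) (R : (S → V) → (S → V) → Prop)
    (u : V → ℝ) (Qfam : Set (Set (Set S → ℝ))) : Prop :=
  ∀ f ∈ Acts 𝓐 X, ∀ g ∈ Acts 𝓐 X,
    (R f g ↔ minmaxQVal Qfam (uAct u g) ≤ minmaxQVal Qfam (uAct u f))

/-- All indicated minima over `Qfam` and maxima over `Q` are attained. -/
def QAttained (𝓐 : Set (Set S)) (X : Set V) (u : V → ℝ)
    (Qfam : Set (Set (Set S → ℝ))) : Prop :=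
  ∀ f ∈ Acts 𝓐 X,
    (∀ Q ∈ Qfam, ∃ q ∈ Q, maxQVal Q (uAct u f) = (fint q (uAct u f) : EReal)) ∧
    ∃ Q ∈ Qfam, minmaxQVal Qfam (uAct u f) = maxQVal Q (uAct u f)

/-- `c₁ ≈_u c₂`: `c₁` and `c₂` induce the same variational functional on `B₀(Σ, u(X))`. -/
def ApproxEq (𝓐 : Set (Set S)) (X : Set V) (u : V → ℝ)
    (c₁ c₂ : (Set S → ℝ) → EReal) : Prop :=
  ∀ φ : S → ℝ, IsSimpleFn 𝓐 φ → (∀ s, φ s ∈ u '' X) →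
    minVal 𝓐 c₁ φ = minVal 𝓐 c₂ φ

/-- `R₁` is more ambiguity averse than `R₂`. -/
def MoreAmbiguityAverse (𝓐 : Set (Set S)) (X : Set V)
    (R₁ R₂ : (S → V) → (S → V) → Prop) : Prop :=
  ∀ f ∈ Acts 𝓐 X, ∀ x ∈ X, R₂ (constAct x) f → R₁ (constAct x) f

/-- `u₁` and `u₂` are positive affine transformations of each other on `X`. -/
def CardEquiv (X : Set V) (u₁ u₂ : V → ℝ) : Prop :=
  ∃ a b : ℝ, 0 < a ∧ ∀ x ∈ X, u₂ x = a * u₁ x + b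

/-- A capacity on `(S, Σ)`. -/
def IsCapacity (𝓐 : Set (Set S)) (π : Set S → ℝ) : Prop :=
  π ∅ = 0 ∧ π Set.univ = 1 ∧ ∀ A ∈ 𝓐, ∀ B ∈ 𝓐, A ⊆ B → π A ≤ π B

/-- The Choquet integral of a (simple) function against a capacity. -/
noncomputable def choquet (π : Set S → ℝ) (φ : S → ℝ) : ℝ :=
  (∫ t in Set.Ioi (0 : ℝ), π {s | t ≤ φ s}) +
    ∫ t in Set.Iio (0 : ℝ), (π {s | t ≤ φ s} - 1)

lemma alg_univ {𝓐 : Set (Set S)} (hA : IsSetAlg 𝓐) : Set.univ ∈ 𝓐 := by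
  have := hA.compl_mem ∅ hA.empty_mem
  simpa using this

lemma alg_inter {𝓐 : Set (Set S)} (hA : IsSetAlg 𝓐) {A B : Set S}
    (hAm : A ∈ 𝓐) (hBm : B ∈ 𝓐) : A ∩ B ∈ 𝓐 := by
  have h := hA.compl_mem _ (hA.union_mem _ (hA.compl_mem _ hAm) _ (hA.compl_mem _ hBm))
  simpa [Set.compl_union, compl_compl] using h

lemma alg_biUnion {𝓐 : Set (Set S)} (hA : IsSetAlg 𝓐) {ι : Type*}
    (F : Finset ι) (B : ι → Set S) (hB : ∀ i ∈ F, B i ∈ 𝓐) :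
    (⋃ i ∈ F, B i) ∈ 𝓐 := by
  classical
  induction F using Finset.induction_on with
  | empty => simpa using hA.empty_mem
  | insert a s ha ih =>
      rw [Finset.set_biUnion_insert]
      exact hA.union_mem _ (hB a (Finset.mem_insert_self a s)) _
        (ih fun i hi => hB i (Finset.mem_insert_of_mem hi))

lemma delta_empty {𝓐 : Set (Set S)} (hA : IsSetAlg 𝓐) {p : Set S → ℝ}
    (hp : p ∈ Δset 𝓐) : p ∅ = 0 := by
  have h := hp.2.2.1 ∅ hA.empty_mem Set.univ (alg_univ hA) (by simp)
  simp only [Set.empty_union] at h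
  linarith

lemma delta_sum {𝓐 : Set (Set S)} (hA : IsSetAlg 𝓐) {p : Set S → ℝ}
    (hp : p ∈ Δset 𝓐) {ι : Type*} (F : Finset ι) (B : ι → Set S)
    (hB : ∀ i ∈ F, B i ∈ 𝓐)
    (hd : ∀ i ∈ F, ∀ j ∈ F, i ≠ j → Disjoint (B i) (B j)) :
    p (⋃ i ∈ F, B i) = ∑ i ∈ F, p (B i) := by
  classical
  induction F using Finset.induction_on with
  | empty => simpa using delta_empty hA hp
  | insert a s ha ih =>
      rw [Finset.set_biUnion_insert, Finset.sum_insert ha]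
      have hBs : (⋃ i ∈ s, B i) ∈ 𝓐 :=
        alg_biUnion hA s B fun i hi => hB i (Finset.mem_insert_of_mem hi)
      have hdisj : Disjoint (B a) (⋃ i ∈ s, B i) := by
        simp only [Set.disjoint_iUnion_right]
        intro i hi
        exact hd a (Finset.mem_insert_self a s) i (Finset.mem_insert_of_mem hi)
          (fun h => ha (h ▸ hi))
      rw [hp.2.2.1 _ (hB a (Finset.mem_insert_self a s)) _ hBs hdisj,
        ih (fun i hi => hB i (Finset.mem_insert_of_mem hi))
          (fun i hi j hj hij => hd i (Finset.mem_insert_of_mem hi) j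
            (Finset.mem_insert_of_mem hj) hij)]

lemma delta_convex {𝓐 : Set (Set S)} {p q : Set S → ℝ}
    (hp : p ∈ Δset 𝓐) (hq : q ∈ Δset 𝓐) {a b : ℝ} (ha : 0 ≤ a) (hb : 0 ≤ b)
    (hab : a + b = 1) : a • p + b • q ∈ Δset 𝓐 := by
  refine ⟨?_, ?_, ?_, ?_⟩
  · simp only [Pi.add_apply, Pi.smul_apply, smul_eq_mul, hp.1, hq.1]; linarith
  · intro A hAm
    simp only [Pi.add_apply, Pi.smul_apply, smul_eq_mul]
    have := hp.2.1 A hAm; have := hq.2.1 A hAm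
    positivity
  · intro A hAm B hBm hdisj
    simp only [Pi.add_apply, Pi.smul_apply, smul_eq_mul,
      hp.2.2.1 A hAm B hBm hdisj, hq.2.2.1 A hAm B hBm hdisj]
    ring
  · intro A hAm
    simp only [Pi.add_apply, Pi.smul_apply, smul_eq_mul, hp.2.2.2 A hAm,
      hq.2.2.2 A hAm]
    ring

-- chunk2 appended to base
lemma preimage_comp_mem {𝓐 : Set (Set S)} (hA : IsSetAlg 𝓐) {β γ : Type*}
    {χ : S → β} (hfin : (Set.range χ).Finite) (hmem : ∀ w, χ ⁻¹' {w} ∈ 𝓐)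
    (g : β → γ) (c : γ) : (fun s => g (χ s)) ⁻¹' {c} ∈ 𝓐 := by
  classical
  have heq : (fun s => g (χ s)) ⁻¹' {c}
      = ⋃ w ∈ hfin.toFinset.filter (fun w => g w = c), χ ⁻¹' {w} := by
    ext s
    simp only [Set.mem_preimage, Set.mem_singleton_iff, Set.mem_iUnion,
      Finset.mem_filter, Set.Finite.mem_toFinset, Set.mem_range]
    constructor
    · intro h; exact ⟨χ s, ⟨⟨s, rfl⟩, h⟩, rfl⟩
    · rintro ⟨w, ⟨-, hw⟩, rfl⟩; exact hw
  rw [heq]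
  exact alg_biUnion hA _ _ fun w _ => hmem w

lemma isSimpleFn_comp {𝓐 : Set (Set S)} (hA : IsSetAlg 𝓐) {β : Type*}
    {χ : S → β} (hfin : (Set.range χ).Finite) (hmem : ∀ w, χ ⁻¹' {w} ∈ 𝓐)
    (v : β → ℝ) : IsSimpleFn 𝓐 (fun s => v (χ s)) := by
  refine ⟨?_, fun t => preimage_comp_mem hA hfin hmem v t⟩
  have : Set.range (fun s => v (χ s)) ⊆ v '' Set.range χ := by
    rintro t ⟨s, rfl⟩; exact ⟨χ s, ⟨s, rfl⟩, rfl⟩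
  exact (hfin.image v).subset this

lemma fint_comp {𝓐 : Set (Set S)} (hA : IsSetAlg 𝓐) {p : Set S → ℝ}
    (hp : p ∈ Δset 𝓐) {β : Type*} {χ : S → β} (hfin : (Set.range χ).Finite)
    (hmem : ∀ w, χ ⁻¹' {w} ∈ 𝓐) (v : β → ℝ) :
    fint p (fun s => v (χ s)) = ∑ w ∈ hfin.toFinset, v w * p (χ ⁻¹' {w}) := by
  classical
  have hθ := isSimpleFn_comp hA hfin hmem v
  rw [fint, dif_pos hθ.1]
  have hpre : ∀ t : ℝ, ((fun s => v (χ s)) ⁻¹' {t} : Set S)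
      = ⋃ w ∈ hfin.toFinset.filter (fun w => v w = t), χ ⁻¹' {w} := by
    intro t
    ext s
    simp only [Set.mem_preimage, Set.mem_singleton_iff, Set.mem_iUnion,
      Finset.mem_filter, Set.Finite.mem_toFinset, Set.mem_range]
    constructor
    · intro h; exact ⟨χ s, ⟨⟨s, rfl⟩, h⟩, rfl⟩
    · rintro ⟨w, ⟨-, hw⟩, rfl⟩; exact hw
  have hsum : ∀ t : ℝ, p ((fun s => v (χ s)) ⁻¹' {t})
      = ∑ w ∈ hfin.toFinset.filter (fun w => v w = t), p (χ ⁻¹' {w}) := by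
    intro t
    rw [hpre t]
    refine delta_sum hA hp _ _ (fun w _ => hmem w) ?_
    intro i _ j _ hij
    rw [Set.disjoint_left]
    rintro x hxi hxj
    have h1 : χ x = i := hxi
    have h2 : χ x = j := hxj
    exact hij (h1.symm.trans h2)
  calc ∑ t ∈ hθ.1.toFinset, t * p ((fun s => v (χ s)) ⁻¹' {t})
      = ∑ t ∈ hθ.1.toFinset, ∑ w ∈ hfin.toFinset.filter (fun w => v w = t),
          v w * p (χ ⁻¹' {w}) := by
        refine Finset.sum_congr rfl fun t _ => ?_
        rw [hsum t, Finset.mul_sum]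
        refine Finset.sum_congr rfl fun w hw => ?_
        rw [(Finset.mem_filter.1 hw).2]
    _ = ∑ w ∈ hfin.toFinset, v w * p (χ ⁻¹' {w}) := by
        refine Finset.sum_fiberwise_of_maps_to ?_ _
        intro w hw
        rw [Set.Finite.mem_toFinset] at hw ⊢
        obtain ⟨s, rfl⟩ := hw
        exact ⟨s, rfl⟩

lemma fint_id_eq {𝓐 : Set (Set S)} (hA : IsSetAlg 𝓐) {p : Set S → ℝ}
    (hp : p ∈ Δset 𝓐) {φ : S → ℝ} (hφ : IsSimpleFn 𝓐 φ) :
    fint p φ = ∑ w ∈ hφ.1.toFinset, w * p (φ ⁻¹' {w}) := by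
  have := fint_comp hA hp hφ.1 hφ.2 (id : ℝ → ℝ)
  simpa using this

lemma fint_add {𝓐 : Set (Set S)} (hA : IsSetAlg 𝓐) {p : Set S → ℝ}
    (hp : p ∈ Δset 𝓐) {φ ψ : S → ℝ} (hφ : IsSimpleFn 𝓐 φ)
    (hψ : IsSimpleFn 𝓐 ψ) :
    fint p (fun s => φ s + ψ s) = fint p φ + fint p ψ := by
  classical
  set χ : S → ℝ × ℝ := fun s => (φ s, ψ s) with hχ
  have hfin : (Set.range χ).Finite :=
    (hφ.1.prod hψ.1).subset (Set.range_pair_subset _ _)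
  have hmem : ∀ w : ℝ × ℝ, χ ⁻¹' {w} ∈ 𝓐 := by
    intro w
    have : χ ⁻¹' {w} = φ ⁻¹' {w.1} ∩ ψ ⁻¹' {w.2} := by
      ext s
      simp [hχ, Prod.ext_iff]
    rw [this]
    exact alg_inter hA (hφ.2 _) (hψ.2 _)
  have h1 := fint_comp hA hp hfin hmem (fun w => w.1 + w.2)
  have h2 := fint_comp hA hp hfin hmem (fun w => w.1)
  have h3 := fint_comp hA hp hfin hmem (fun w => w.2)
  have e1 : (fun s => (fun w : ℝ × ℝ => w.1 + w.2) (χ s)) = fun s => φ s + ψ s := rfl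
  have e2 : (fun s => (fun w : ℝ × ℝ => w.1) (χ s)) = φ := rfl
  have e3 : (fun s => (fun w : ℝ × ℝ => w.2) (χ s)) = ψ := rfl
  rw [e1] at h1; rw [e2] at h2; rw [e3] at h3
  rw [h1, h2, h3, ← Finset.sum_add_distrib]
  exact Finset.sum_congr rfl fun w _ => by ring

lemma fint_mul_const {𝓐 : Set (Set S)} (hA : IsSetAlg 𝓐) {p : Set S → ℝ}
    (hp : p ∈ Δset 𝓐) {φ : S → ℝ} (hφ : IsSimpleFn 𝓐 φ) (c : ℝ) :
    fint p (fun s => c * φ s) = c * fint p φ := by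
  have h1 := fint_comp hA hp hφ.1 hφ.2 (fun t => c * t)
  rw [h1, fint_id_eq hA hp hφ, Finset.mul_sum]
  exact Finset.sum_congr rfl fun w _ => by ring

lemma fint_const [Nonempty S] {p : Set S → ℝ} (hp1 : p Set.univ = 1) (r : ℝ) :
    fint p (fun _ : S => r) = r := by
  classical
  have hr : (Set.range fun _ : S => r) = {r} := Set.range_const
  have hfin : (Set.range fun _ : S => r).Finite := by rw [hr]; exact Set.finite_singleton r
  rw [fint, dif_pos hfin]
  have htf : hfin.toFinset = {r} := by
    ext t; simp [hr]
  rw [htf, Finset.sum_singleton]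
  have : ((fun _ : S => r) ⁻¹' {r} : Set S) = Set.univ := by
    ext s; simp
  rw [this, hp1, mul_one]

lemma fint_zero {p : Set S → ℝ} : fint p (fun _ : S => (0:ℝ)) = 0 := by
  classical
  have hfin : (Set.range fun _ : S => (0:ℝ)).Finite :=
    (Set.finite_singleton 0).subset (by rintro t ⟨s, rfl⟩; simp)
  rw [fint, dif_pos hfin]
  refine Finset.sum_eq_zero fun t ht => ?_
  rw [Set.Finite.mem_toFinset] at ht
  obtain ⟨s, rfl⟩ := ht
  simp

lemma fint_linear_p {φ : S → ℝ} (p q : Set S → ℝ) (a b : ℝ) :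
    fint (a • p + b • q) φ = a * fint p φ + b * fint q φ := by
  classical
  rw [fint, fint, fint]
  by_cases h : (Set.range φ).Finite
  · rw [dif_pos h, dif_pos h, dif_pos h, Finset.mul_sum, Finset.mul_sum,
      ← Finset.sum_add_distrib]
    refine Finset.sum_congr rfl fun t _ => ?_
    simp only [Pi.add_apply, Pi.smul_apply, smul_eq_mul]
    ring
  · rw [dif_neg h, dif_neg h, dif_neg h]; ring

lemma isSimpleFn_zero {𝓐 : Set (Set S)} (hA : IsSetAlg 𝓐) :
    IsSimpleFn 𝓐 (fun _ : S => (0:ℝ)) := by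
  constructor
  · exact (Set.finite_singleton 0).subset (by rintro t ⟨s, rfl⟩; simp)
  · intro t
    by_cases h : (0:ℝ) = t
    · have : ((fun _ : S => (0:ℝ)) ⁻¹' {t} : Set S) = Set.univ := by
        ext s; simp [h]
      rw [this]; exact alg_univ hA
    · have : ((fun _ : S => (0:ℝ)) ⁻¹' {t} : Set S) = ∅ := by
        ext s; simp [h]
      rw [this]; exact hA.empty_mem

lemma isSimpleFn_add {𝓐 : Set (Set S)} (hA : IsSetAlg 𝓐) {φ ψ : S → ℝ}
    (hφ : IsSimpleFn 𝓐 φ) (hψ : IsSimpleFn 𝓐 ψ) :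
    IsSimpleFn 𝓐 (fun s => φ s + ψ s) := by
  classical
  set χ : S → ℝ × ℝ := fun s => (φ s, ψ s) with hχ
  have hfin : (Set.range χ).Finite :=
    (hφ.1.prod hψ.1).subset (Set.range_pair_subset _ _)
  have hmem : ∀ w : ℝ × ℝ, χ ⁻¹' {w} ∈ 𝓐 := by
    intro w
    have : χ ⁻¹' {w} = φ ⁻¹' {w.1} ∩ ψ ⁻¹' {w.2} := by
      ext s; simp [hχ, Prod.ext_iff]
    rw [this]; exact alg_inter hA (hφ.2 _) (hψ.2 _)
  exact isSimpleFn_comp hA hfin hmem (fun w => w.1 + w.2)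

lemma isSimpleFn_mul_const {𝓐 : Set (Set S)} (hA : IsSetAlg 𝓐) {φ : S → ℝ}
    (hφ : IsSimpleFn 𝓐 φ) (c : ℝ) : IsSimpleFn 𝓐 (fun s => c * φ s) :=
  isSimpleFn_comp hA hφ.1 hφ.2 (fun t => c * t)

lemma isSimpleFn_sum {𝓐 : Set (Set S)} (hA : IsSetAlg 𝓐) {ι : Type*}
    (F : Finset ι) (a : ι → ℝ) (φ : ι → S → ℝ)
    (hφ : ∀ i ∈ F, IsSimpleFn 𝓐 (φ i)) :
    IsSimpleFn 𝓐 (fun s => ∑ i ∈ F, a i * φ i s) := by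
  classical
  induction F using Finset.induction_on with
  | empty => simpa using isSimpleFn_zero hA
  | insert c s ha ih =>
      have h1 : (fun x => ∑ i ∈ insert c s, a i * φ i x)
          = fun x => a c * φ c x + ∑ i ∈ s, a i * φ i x := by
        funext x; rw [Finset.sum_insert ha]
      rw [h1]
      exact isSimpleFn_add hA
        (isSimpleFn_mul_const hA (hφ c (Finset.mem_insert_self c s)) (a c))
        (ih fun i hi => hφ i (Finset.mem_insert_of_mem hi))

lemma fint_sum {𝓐 : Set (Set S)} (hA : IsSetAlg 𝓐) [Nonempty S]
    {p : Set S → ℝ} (hp : p ∈ Δset 𝓐) {ι : Type*}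
    (F : Finset ι) (a : ι → ℝ) (φ : ι → S → ℝ)
    (hφ : ∀ i ∈ F, IsSimpleFn 𝓐 (φ i)) :
    fint p (fun s => ∑ i ∈ F, a i * φ i s) = ∑ i ∈ F, a i * fint p (φ i) := by
  classical
  induction F using Finset.induction_on with
  | empty => simpa using fint_zero
  | insert c s ha ih =>
      have h1 : (fun x => ∑ i ∈ insert c s, a i * φ i x)
          = fun x => (fun y => a c * φ c y) x + (fun y => ∑ i ∈ s, a i * φ i y) x := by
        funext x; rw [Finset.sum_insert ha]
      rw [h1, fint_add hA hp
          (isSimpleFn_mul_const hA (hφ c (Finset.mem_insert_self c s)) (a c))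
          (isSimpleFn_sum hA s a φ fun i hi => hφ i (Finset.mem_insert_of_mem hi)),
        fint_mul_const hA hp (hφ c (Finset.mem_insert_self c s)) (a c),
        ih (fun i hi => hφ i (Finset.mem_insert_of_mem hi)), Finset.sum_insert ha]

open Classical in
lemma fint_indicator {𝓐 : Set (Set S)} (hA : IsSetAlg 𝓐) {p : Set S → ℝ}
    (hp : p ∈ Δset 𝓐) {A : Set S} (hAm : A ∈ 𝓐) :
    fint p (fun s => if s ∈ A then (1:ℝ) else 0) = p A := by
  classical
  set χ : S → Bool := fun s => if s ∈ A then true else false with hχ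
  have hfin : (Set.range χ).Finite := Set.toFinite _
  have hpre_t : χ ⁻¹' {true} = A := by
    ext s; simp [hχ]
  have hpre_f : χ ⁻¹' {false} = Aᶜ := by
    ext s; simp [hχ]
  have hmem : ∀ w : Bool, χ ⁻¹' {w} ∈ 𝓐 := by
    intro w
    cases w
    · rw [hpre_f]; exact hA.compl_mem _ hAm
    · rw [hpre_t]; exact hAm
  have h1 := fint_comp hA hp hfin hmem (fun b => if b then (1:ℝ) else 0)
  have e1 : (fun s => (fun b => if b then (1:ℝ) else 0) (χ s))
      = fun s => if s ∈ A then (1:ℝ) else 0 := by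
    funext s; by_cases h : s ∈ A <;> simp [hχ, h]
  rw [e1] at h1
  rw [h1]
  have hsub : hfin.toFinset ⊆ (Finset.univ : Finset Bool) := Finset.subset_univ _
  rw [Finset.sum_subset hsub ?_]
  · rw [Fintype.sum_bool]
    rw [hpre_t, hpre_f]
    simp
  · intro w _ hw
    rw [Set.Finite.mem_toFinset] at hw
    have : χ ⁻¹' {w} = ∅ := by
      rw [Set.preimage_singleton_eq_empty]
      exact hw
    rw [this, delta_empty hA hp, mul_zero]

lemma delta_ext {𝓐 : Set (Set S)} (hA : IsSetAlg 𝓐) {p q : Set S → ℝ}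
    (hp : p ∈ Δset 𝓐) (hq : q ∈ Δset 𝓐)
    (h : ∀ φ : S → ℝ, IsSimpleFn 𝓐 φ → fint p φ = fint q φ) : p = q := by
  classical
  funext A
  by_cases hAm : A ∈ 𝓐
  · have hsf : IsSimpleFn 𝓐 (fun s => if s ∈ A then (1:ℝ) else 0) := by
      constructor
      · exact (((Set.finite_singleton 0).insert 1)).subset
          (by rintro t ⟨s, rfl⟩; by_cases h : s ∈ A <;> simp [h])
      · intro t
        have : ((fun s => if s ∈ A then (1:ℝ) else 0) ⁻¹' {t} : Set S)
            = if t = 1 then A else (if t = 0 then Aᶜ else ∅) := by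
          ext s
          simp only [Set.mem_preimage, Set.mem_singleton_iff]
          by_cases hs : s ∈ A <;> split_ifs with ht1 ht0
          · subst ht1; simp [hs]
          · subst ht0; simp [hs]
          · simp [hs, eq_comm, ht1]
          · subst ht1; simp [hs]
          · subst ht0; simp [hs]
          · simp [hs, eq_comm, ht0]
        rw [this]
        split_ifs
        · exact hAm
        · exact hA.compl_mem _ hAm
        · exact hA.empty_mem
    have := h _ hsf
    rwa [fint_indicator hA hp hAm, fint_indicator hA hq hAm] at this
  · rw [hp.2.2.2 A hAm, hq.2.2.2 A hAm]

lemma continuous_fint {𝓐 : Set (Set S)} {φ : S → ℝ} (hφ : IsSimpleFn 𝓐 φ) :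
    @Continuous _ _ (weakStar 𝓐) _ (fun p : Set S → ℝ => fint p φ) := by
  letI : TopologicalSpace (Set S → ℝ) := weakStar 𝓐
  have h1 : Continuous fun p : Set S → ℝ =>
      fun ψ : {ψ : S → ℝ // IsSimpleFn 𝓐 ψ} => fint p ψ.1 := continuous_induced_dom
  exact (continuous_apply (⟨φ, hφ⟩ : {ψ : S → ℝ // IsSimpleFn 𝓐 ψ})).comp h1

lemma exists_min {𝓐 : Set (Set S)} {P : Set (Set S → ℝ)}
    (hPk : @IsCompact _ (weakStar 𝓐) P) (hPn : P.Nonempty)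
    {φ : S → ℝ} (hφ : IsSimpleFn 𝓐 φ) :
    ∃ p ∈ P, minPVal P φ = (fint p φ : EReal) ∧ ∀ q ∈ P, fint p φ ≤ fint q φ := by
  letI : TopologicalSpace (Set S → ℝ) := weakStar 𝓐
  obtain ⟨p, hp, hmin⟩ := hPk.exists_isMinOn hPn (continuous_fint hφ).continuousOn
  refine ⟨p, hp, ?_, fun q hq => hmin hq⟩
  refine le_antisymm (iInf₂_le p hp) (le_iInf₂ fun q hq => ?_)
  exact_mod_cast hmin hq

lemma exists_max {𝓐 : Set (Set S)} {Q : Set (Set S → ℝ)}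
    (hQk : @IsCompact _ (weakStar 𝓐) Q) (hQn : Q.Nonempty)
    {φ : S → ℝ} (hφ : IsSimpleFn 𝓐 φ) :
    ∃ q ∈ Q, maxQVal Q φ = (fint q φ : EReal) ∧ ∀ r ∈ Q, fint r φ ≤ fint q φ := by
  letI : TopologicalSpace (Set S → ℝ) := weakStar 𝓐
  obtain ⟨q, hq, hmax⟩ := hQk.exists_isMaxOn hQn (continuous_fint hφ).continuousOn
  refine ⟨q, hq, ?_, fun r hr => hmax hr⟩
  refine le_antisymm (iSup₂_le fun r hr => ?_)
    (le_iSup₂ (f := fun r (_ : r ∈ Q) => (fint r φ : EReal)) q hq)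
  exact_mod_cast hmax hr

lemma minPVal_const [Nonempty S] {𝓐 : Set (Set S)} {P : Set (Set S → ℝ)}
    (hP : P ⊆ Δset 𝓐) (hPn : P.Nonempty) (r : ℝ) :
    minPVal P (fun _ : S => r) = (r : EReal) := by
  obtain ⟨p, hp⟩ := hPn
  refine le_antisymm ?_ (le_iInf₂ fun q hq => ?_)
  · have := iInf₂_le (f := fun q (_ : q ∈ P) => (fint q (fun _ : S => r) : EReal)) p hp
    rwa [fint_const (hP hp).1] at this
  · rw [fint_const (hP hq).1]

lemma maxQVal_const [Nonempty S] {𝓐 : Set (Set S)} {Q : Set (Set S → ℝ)}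
    (hQ : Q ⊆ Δset 𝓐) (hQn : Q.Nonempty) (r : ℝ) :
    maxQVal Q (fun _ : S => r) = (r : EReal) := by
  obtain ⟨q, hq⟩ := hQn
  refine le_antisymm (iSup₂_le fun p hp => ?_) ?_
  · rw [fint_const (hQ hp).1]
  · have := le_iSup₂ (f := fun p (_ : p ∈ Q) => (fint p (fun _ : S => r) : EReal)) q hq
    rwa [fint_const (hQ hq).1] at this

open Classical in
lemma pi_dual {ι : Type*} (L : ((ι → ℝ)) →L[ℝ] ℝ) :
    ∃ F : Finset ι, ∀ x : ι → ℝ, L x = ∑ i ∈ F, L (Pi.single i 1) * x i := by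
  have h0 : L ⁻¹' Set.Ioo (-1 : ℝ) 1 ∈ nhds (0 : ι → ℝ) :=
    L.continuous.continuousAt.preimage_mem_nhds
      (by rw [map_zero]; exact Ioo_mem_nhds (by norm_num) (by norm_num))
  rw [nhds_pi, Filter.mem_pi] at h0
  obtain ⟨I, hIfin, t, ht, hsub⟩ := h0
  refine ⟨hIfin.toFinset, fun x => ?_⟩
  have hker : ∀ y : ι → ℝ, (∀ i ∈ I, y i = 0) → L y = 0 := by
    intro y hy
    by_contra hne
    have hmem : (2 / L y) • y ∈ I.pi t := by
      intro i hi
      have : ((2 / L y) • y) i = 0 := by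
        simp [Pi.smul_apply, hy i hi]
      rw [this]
      exact mem_of_mem_nhds (ht i)
    have h2 := hsub hmem
    rw [Set.mem_preimage, ContinuousLinearMap.map_smul, smul_eq_mul, div_mul_cancel₀ 2 hne] at h2
    simp [Set.mem_Ioo] at h2

  set y : ι → ℝ := ∑ i ∈ hIfin.toFinset, x i • (Pi.single i (1:ℝ) : ι → ℝ) with hy
  have hxy : ∀ i ∈ I, (x - y) i = 0 := by
    intro i hi
    have hyi : y i = x i := by
      rw [hy, Finset.sum_apply]
      rw [Finset.sum_eq_single i]
      · simp
      · intro j _ hj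
        simp [Pi.single_apply, Ne.symm hj]
      · intro hni
        exact absurd (hIfin.mem_toFinset.2 hi) hni
    simp [hyi]
  have h1 : L (x - y) = 0 := hker _ hxy
  have h2 : L x = L y := by
    have := map_sub L x y
    rw [h1] at this
    linarith
  rw [h2, hy, map_sum]
  refine Finset.sum_congr rfl fun i _ => ?_
  rw [ContinuousLinearMap.map_smul, smul_eq_mul, mul_comm]

lemma fint_add_p {φ : S → ℝ} (p q : Set S → ℝ) :
    fint (p + q) φ = fint p φ + fint q φ := by
  have h : p + q = (1:ℝ) • p + (1:ℝ) • q := by simp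
  rw [h, fint_linear_p]; ring

lemma fint_smul_p {φ : S → ℝ} (a : ℝ) (p : Set S → ℝ) :
    fint (a • p) φ = a * fint p φ := by
  have h : a • p = a • p + (0:ℝ) • p := by simp
  rw [h, fint_linear_p]; ring

lemma sep_core {𝓐 : Set (Set S)} (hA : IsSetAlg 𝓐) [Nonempty S]
    {P K : Set (Set S → ℝ)}
    (hP : P ⊆ Δset 𝓐) (hPc : Convex ℝ P) (hPk : @IsCompact _ (weakStar 𝓐) P)
    (hK : K ⊆ Δset 𝓐) (hKc : Convex ℝ K) (hKk : @IsCompact _ (weakStar 𝓐) K)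
    (hdisj : ∀ x, x ∈ P → x ∈ K → False) :
    ∃ ψ : S → ℝ, IsSimpleFn 𝓐 ψ ∧ ∃ s : ℝ,
      (∀ a ∈ K, fint a ψ < s) ∧ ∀ b ∈ P, s < fint b ψ := by
  classical
  letI : TopologicalSpace (Set S → ℝ) := weakStar 𝓐
  set ι := {φ : S → ℝ // IsSimpleFn 𝓐 φ} with hι
  set Tm : (Set S → ℝ) → (ι → ℝ) := fun p i => fint p i.1 with hTm
  have hTcont : Continuous Tm := continuous_induced_dom
  let Tlin : (Set S → ℝ) →ₗ[ℝ] (ι → ℝ) :=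
    { toFun := Tm
      map_add' := fun p q => by funext i; exact fint_add_p p q
      map_smul' := fun a p => by funext i; exact fint_smul_p a p }
  have hAc : Convex ℝ (Tm '' K) := hKc.linear_image Tlin
  have hBc : Convex ℝ (Tm '' P) := hPc.linear_image Tlin
  have hAk : IsCompact (Tm '' K) := hKk.image hTcont
  have hBk : IsCompact (Tm '' P) := hPk.image hTcont
  have hdisj' : Disjoint (Tm '' K) (Tm '' P) := by
    rw [Set.disjoint_left]
    rintro w ⟨a, haK, rfl⟩ ⟨b, hbP, hw⟩
    have hab : b = a := by
      refine delta_ext hA (hP hbP) (hK haK) fun φ hφ => ?_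
      exact congrFun hw ⟨φ, hφ⟩
    exact hdisj b hbP (hab ▸ haK)
  obtain ⟨L, s, t, h1, hst, h2⟩ :=
    geometric_hahn_banach_compact_closed hAc hAk hBc hBk.isClosed hdisj'
  obtain ⟨F, hF⟩ := pi_dual L
  set ψ : S → ℝ := fun x => ∑ i ∈ F, L (Pi.single i 1) * i.1 x with hψdef
  have hψ : IsSimpleFn 𝓐 ψ :=
    isSimpleFn_sum hA F (fun i => L (Pi.single i 1)) (fun i => i.1) (fun i _ => i.2)
  have key : ∀ r ∈ Δset 𝓐, fint r ψ = L (Tm r) := by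
    intro r hr
    rw [hψdef, fint_sum hA hr F (fun i => L (Pi.single i 1)) (fun i => i.1)
      (fun i _ => i.2), hF (Tm r)]
    exact Finset.sum_congr rfl fun i _ => by congr!
  refine ⟨ψ, hψ, s, fun a ha => ?_, fun b hb => ?_⟩
  · rw [key a (hK ha)]
    exact h1 (Tm a) ⟨a, ha, rfl⟩
  · rw [key b (hP hb)]
    exact lt_trans hst (h2 (Tm b) ⟨b, hb, rfl⟩)

lemma minPVal_smul {𝓐 : Set (Set S)} (hA : IsSetAlg 𝓐) {P : Set (Set S → ℝ)}
    (hP : P ⊆ Δset 𝓐) {φ : S → ℝ} (hφ : IsSimpleFn 𝓐 φ) {p : Set S → ℝ}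
    (hp : p ∈ P) (hmin : ∀ q ∈ P, fint p φ ≤ fint q φ) {lam : ℝ} (hlam : 0 < lam) :
    minPVal P (fun s => lam * φ s) = ((lam * fint p φ : ℝ) : EReal) := by
  refine le_antisymm ?_ (le_iInf₂ fun q hq => ?_)
  · have h := iInf₂_le (f := fun q (_ : q ∈ P) =>
      (fint q (fun s => lam * φ s) : EReal)) p hp
    rwa [fint_mul_const hA (hP hp) hφ lam] at h
  · rw [fint_mul_const hA (hP hq) hφ lam]
    exact_mod_cast mul_le_mul_of_nonneg_left (hmin q hq) hlam.le

lemma maxQVal_smul {𝓐 : Set (Set S)} (hA : IsSetAlg 𝓐) {Q : Set (Set S → ℝ)}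
    (hQ : Q ⊆ Δset 𝓐) {φ : S → ℝ} (hφ : IsSimpleFn 𝓐 φ) {q : Set S → ℝ}
    (hq : q ∈ Q) (hmax : ∀ r ∈ Q, fint r φ ≤ fint q φ) {lam : ℝ} (hlam : 0 < lam) :
    maxQVal Q (fun s => lam * φ s) = ((lam * fint q φ : ℝ) : EReal) := by
  refine le_antisymm (iSup₂_le fun r hr => ?_) ?_
  · rw [fint_mul_const hA (hQ hr) hφ lam]
    exact_mod_cast mul_le_mul_of_nonneg_left (hmax r hr) hlam.le
  · have h := le_iSup₂ (f := fun r (_ : r ∈ Q) =>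
      (fint r (fun s => lam * φ s) : EReal)) q hq
    rwa [fint_mul_const hA (hQ hq) hφ lam] at h

theorem stmt13 {S V : Type*} [Nonempty S] [AddCommGroup V] [Module ℝ V]
    (𝓐 : Set (Set S)) (hA : IsSetAlg 𝓐)
    (X : Set V) (hX : X.Nonempty) (hXc : Convex ℝ X)
    (R : (S → V) → (S → V) → Prop) (hpref : IBPref 𝓐 X R)
    (u : V → ℝ) (hu : IsNonconstAffine X u) (h0 : (0 : ℝ) ∈ interior (u '' X))
    (P₁ P₂ : Set (Set S → ℝ))
    (hP₁ : P₁ ⊆ Δset 𝓐) (hP₁n : P₁.Nonempty) (hP₁c : Convex ℝ P₁)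
    (hP₁k : @IsCompact _ (weakStar 𝓐) P₁)
    (hP₂ : P₂ ⊆ Δset 𝓐) (hP₂n : P₂.Nonempty) (hP₂c : Convex ℝ P₂)
    (hP₂k : @IsCompact _ (weakStar 𝓐) P₂)
    (α : ℝ) (hα : α ∈ Set.Icc (0 : ℝ) 1)
    (hrep : ∀ f ∈ Acts 𝓐 X, ∀ g ∈ Acts 𝓐 X,
      (R f g ↔
        (α : EReal) * minPVal P₁ (uAct u g) +
          ((1 - α : ℝ) : EReal) * maxQVal P₂ (uAct u g) ≤
        (α : EReal) * minPVal P₁ (uAct u f) +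
          ((1 - α : ℝ) : EReal) * maxQVal P₂ (uAct u f)))
    (xf : (S → V) → V) (hxf : IsCE 𝓐 X R xf) :
    PstarOf 𝓐 X u xf =
      {P | P ⊆ Δset 𝓐 ∧ P.Nonempty ∧ Convex ℝ P ∧ (@IsCompact _ (weakStar 𝓐) P) ∧
        α • P₁ ⊆ P - (1 - α) • P₂} := by
  classical
  obtain ⟨hα0, hα1⟩ := hα
  have h1α : (0:ℝ) ≤ 1 - α := by linarith
  have hconstAct : ∀ x ∈ X, constAct x ∈ Acts 𝓐 X := by
    intro x hx
    refine ⟨fun s => hx, ?_, ?_⟩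
    · exact (Set.finite_singleton x).subset (by rintro v ⟨s, rfl⟩; simp [constAct])
    · intro v
      by_cases h : x = v
      · have : (constAct x : S → V) ⁻¹' {v} = Set.univ := by
          ext s; simp [constAct, h]
        rw [this]; exact alg_univ hA
      · have : (constAct x : S → V) ⁻¹' {v} = ∅ := by
          ext s; simp [constAct, h]
        rw [this]; exact hA.empty_mem
  have huSimple : ∀ f ∈ Acts 𝓐 X, IsSimpleFn 𝓐 (uAct u f) := fun f hf =>
    isSimpleFn_comp hA hf.2.1 hf.2.2 u
  have hkey : ∀ f ∈ Acts 𝓐 X,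
      (α : EReal) * minPVal P₁ (uAct u f) +
        ((1 - α : ℝ) : EReal) * maxQVal P₂ (uAct u f) = ((u (xf f)) : EReal) := by
    intro f hf
    obtain ⟨hxX, hR1, hR2⟩ := hxf f hf
    have hca : constAct (xf f) ∈ Acts 𝓐 X := hconstAct _ hxX
    have e1 : uAct u (constAct (xf f)) = fun _ : S => u (xf f) := rfl
    have hVc : (α : EReal) * minPVal P₁ (uAct u (constAct (xf f))) +
        ((1 - α : ℝ) : EReal) * maxQVal P₂ (uAct u (constAct (xf f)))
        = ((u (xf f)) : EReal) := by
      rw [e1, minPVal_const hP₁ hP₁n, maxQVal_const hP₂ hP₂n,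
        ← EReal.coe_mul, ← EReal.coe_mul, ← EReal.coe_add, EReal.coe_eq_coe_iff]
      ring
    have hle1 := (hrep f hf _ hca).1 hR1
    have hle2 := (hrep _ hca f hf).1 hR2
    rw [← hVc]
    exact le_antisymm hle2 hle1
  ext P
  simp only [PstarOf, Set.mem_setOf_eq]
  constructor
  · rintro ⟨hPd, hPn, hPc, hPk, hPle⟩
    refine ⟨hPd, hPn, hPc, hPk, ?_⟩
    have hC1 : ∀ ψ : S → ℝ, IsSimpleFn 𝓐 ψ →
        minPVal P ψ ≤ (α : EReal) * minPVal P₁ ψ +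
          ((1 - α : ℝ) : EReal) * maxQVal P₂ ψ := by
      intro ψ hψ
      obtain ⟨ε, hε, hball⟩ := Metric.mem_nhds_iff.1 (mem_interior_iff_mem_nhds.1 h0)
      obtain ⟨M, hM⟩ := (hψ.1.image abs).bddAbove
      have hM0 : 0 ≤ M := le_trans (abs_nonneg (ψ (Classical.arbitrary S)))
        (hM ⟨ψ (Classical.arbitrary S), ⟨Classical.arbitrary S, rfl⟩, rfl⟩)
      set lam := ε / (M + 1) with hlamdef
      have hlam : 0 < lam := div_pos hε (by linarith)
      have hball' : ∀ s, lam * ψ s ∈ u '' X := by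
        intro s
        apply hball
        rw [Metric.mem_ball, Real.dist_0_eq_abs]
        have hψM : |ψ s| ≤ M := hM ⟨ψ s, ⟨s, rfl⟩, rfl⟩
        rw [abs_mul, abs_of_pos hlam]
        calc lam * |ψ s| ≤ lam * M := mul_le_mul_of_nonneg_left hψM hlam.le
          _ < lam * (M + 1) := by nlinarith
          _ = ε := by rw [hlamdef]; field_simp
      have hch : ∀ t : ℝ, ∃ v, v ∈ X ∧ (lam * t ∈ u '' X → u v = lam * t) := by
        intro t
        by_cases h : lam * t ∈ u '' X
        · obtain ⟨v, hv, hvu⟩ := h; exact ⟨v, hv, fun _ => hvu⟩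
        · exact ⟨hX.some, hX.some_mem, fun hc => absurd hc h⟩
      choose g hgX hgu using hch
      set f : S → V := fun s => g (ψ s) with hfdef
      have hfact : f ∈ Acts 𝓐 X := by
        refine ⟨fun s => hgX _, ?_, fun v => preimage_comp_mem hA hψ.1 hψ.2 g v⟩
        exact (hψ.1.image g).subset (by rintro v ⟨s, rfl⟩; exact ⟨ψ s, ⟨s, rfl⟩, rfl⟩)
      have hfu : uAct u f = fun s => lam * ψ s := funext fun s => hgu (ψ s) (hball' s)
      have hle := hPle f hfact
      rw [← hkey f hfact, hfu] at hle
      obtain ⟨pP, hpP, hmP, hminP⟩ := exists_min hPk hPn hψ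
      obtain ⟨p₁, hp₁, hm₁, hmin₁⟩ := exists_min hP₁k hP₁n hψ
      obtain ⟨q₂, hq₂, hM₂, hmax₂⟩ := exists_max hP₂k hP₂n hψ
      rw [minPVal_smul hA hPd hψ hpP hminP hlam,
        minPVal_smul hA hP₁ hψ hp₁ hmin₁ hlam,
        maxQVal_smul hA hP₂ hψ hq₂ hmax₂ hlam,
        ← EReal.coe_mul, ← EReal.coe_mul, ← EReal.coe_add, EReal.coe_le_coe_iff] at hle
      have hreal : fint pP ψ ≤ α * fint p₁ ψ + (1 - α) * fint q₂ ψ := by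
        have h2 : lam * fint pP ψ ≤ lam * (α * fint p₁ ψ + (1 - α) * fint q₂ ψ) := by
          nlinarith [hle]
        exact le_of_mul_le_mul_left (by linarith [h2]) hlam
      rw [hmP, hm₁, hM₂, ← EReal.coe_mul, ← EReal.coe_mul, ← EReal.coe_add,
        EReal.coe_le_coe_iff]
      exact hreal
    rintro z ⟨p₁, hp₁, rfl⟩
    by_contra hznot
    set Kset : Set (Set S → ℝ) := (fun q => α • p₁ + (1 - α) • q) '' P₂ with hKdef
    have hKsub : Kset ⊆ Δset 𝓐 := by
      rintro _ ⟨q, hq, rfl⟩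
      exact delta_convex (hP₁ hp₁) (hP₂ hq) hα0 h1α (by ring)
    have hKconv : Convex ℝ Kset := by
      rintro _ ⟨q, hq, rfl⟩ _ ⟨q', hq', rfl⟩ a b ha hb hab
      refine ⟨a • q + b • q', hP₂c hq hq' ha hb hab, ?_⟩
      have hb' : b = 1 - a := by linarith
      subst hb'
      module
    have hKk : @IsCompact _ (weakStar 𝓐) Kset := by
      letI : TopologicalSpace (Set S → ℝ) := weakStar 𝓐
      have hcont : Continuous (fun q : Set S → ℝ => α • p₁ + (1 - α) • q) := by
        apply continuous_induced_rng.2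
        apply continuous_pi
        intro i
        show Continuous fun q : Set S → ℝ => fint (α • p₁ + (1 - α) • q) i.1
        have h : (fun q : Set S → ℝ => fint (α • p₁ + (1 - α) • q) i.1)
            = fun q : Set S → ℝ => α * fint p₁ i.1 + (1 - α) * fint q i.1 := by
          funext q
          exact fint_linear_p p₁ q α (1 - α)
        rw [h]
        exact continuous_const.add (continuous_const.mul (continuous_fint i.2))
      exact hP₂k.image hcont
    have hdisjPK : ∀ x, x ∈ P → x ∈ Kset → False := by
      rintro x hxP ⟨q, hq, rfl⟩
      apply hznot
      show α • p₁ ∈ P - (1 - α) • P₂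
      have heq : α • p₁ = (α • p₁ + (1 - α) • q) - (1 - α) • q := by abel
      rw [heq]
      exact Set.sub_mem_sub hxP (Set.smul_mem_smul_set hq)
    obtain ⟨ψ, hψ, s, hKlt, hPgt⟩ :=
      sep_core hA hPd hPc hPk hKsub hKconv hKk hdisjPK
    obtain ⟨pP, hpP, hmP, hminP⟩ := exists_min hPk hPn hψ
    obtain ⟨p₁m, hp₁m, hm₁, hmin₁⟩ := exists_min hP₁k hP₁n hψ
    obtain ⟨q₂, hq₂, hM₂, hmax₂⟩ := exists_max hP₂k hP₂n hψ
    have hCψ := hC1 ψ hψ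
    rw [hmP, hm₁, hM₂, ← EReal.coe_mul, ← EReal.coe_mul, ← EReal.coe_add,
      EReal.coe_le_coe_iff] at hCψ
    have h1 := hPgt pP hpP
    have h2 := hKlt _ ⟨q₂, hq₂, rfl⟩
    rw [fint_linear_p] at h2
    have h3 : fint p₁m ψ ≤ fint p₁ ψ := hmin₁ p₁ hp₁
    nlinarith [mul_le_mul_of_nonneg_left h3 hα0]
  · rintro ⟨hPd, hPn, hPc, hPk, hsub⟩
    refine ⟨hPd, hPn, hPc, hPk, fun f hf => ?_⟩
    rw [← hkey f hf]
    have hsf := huSimple f hf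
    obtain ⟨p₁, hp₁, hm₁, hmin₁⟩ := exists_min hP₁k hP₁n hsf
    obtain ⟨q₂, hq₂, hM₂, hmax₂⟩ := exists_max hP₂k hP₂n hsf
    have hz : α • p₁ ∈ α • P₁ := Set.smul_mem_smul_set hp₁
    obtain ⟨x, hxP, y, hy, hxy⟩ := Set.mem_sub.1 (hsub hz)
    obtain ⟨q, hq, rfl⟩ := hy
    have hx : x = α • p₁ + (1 - α) • q := by
      have h := eq_add_of_sub_eq hxy
      rw [h]
    have hfx : fint x (uAct u f) = α * fint p₁ (uAct u f) + (1 - α) * fint q (uAct u f) := by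
      rw [hx]; exact fint_linear_p p₁ q α (1 - α)
    calc minPVal P (uAct u f) ≤ (fint x (uAct u f) : EReal) := iInf₂_le x hxP
      _ ≤ ((α * fint p₁ (uAct u f) + (1 - α) * fint q₂ (uAct u f) : ℝ) : EReal) := by
          rw [hfx]
          exact_mod_cast add_le_add le_rfl
            (mul_le_mul_of_nonneg_left (hmax₂ q hq) h1α)
      _ = (α : EReal) * minPVal P₁ (uAct u f) +
          ((1 - α : ℝ) : EReal) * maxQVal P₂ (uAct u f) := by
          rw [hm₁, hM₂, ← EReal.coe_mul, ← EReal.coe_mul, ← EReal.coe_add]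


end Paper
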